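/- Let l : ℝ → ℝ be five times continuously differentiable with a local minimum at z* satisfying l''(z*) > 0 and α_l(z*) = 3(l'''(z*))² − l''''(z*)·l''(z*) > 0. Define D_η(z) = l'(z) + l'(z − η·l'(z)). Then there exist ρ > 0 and σ > 0 such that for all η ∈ [(2−ρ)/l''(z*), 2/l''(z*)] and all z with |z − z*| ≤ σ, the derivative of D_η satisfies |D_η'(z)| ≤ 1/η. -/

import Mathlib

/-- Just below the EoS threshold, the derivative of the two-step
displacement `D_η(z) = l'(z) + l'(z − η l'(z))` satisfies `|D_η'(z)| ≤ 1/η` near `z*`. -/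
theorem two_step_derivative_bound_below_eos
    (l : ℝ → ℝ) (zs : ℝ)
    (hl : ContDiff ℝ 5 l) (hmin : IsLocalMin l zs)
    (hl2 : 0 < iteratedDeriv 2 l zs)
    (hps : 0 < 3 * (iteratedDeriv 3 l zs) ^ 2 -
        iteratedDeriv 4 l zs * iteratedDeriv 2 l zs) :
    ∃ ρ > (0 : ℝ), ∃ σ > (0 : ℝ),
      ∀ η ∈ Set.Icc ((2 - ρ) / iteratedDeriv 2 l zs) (2 / iteratedDeriv 2 l zs),
        ∀ z : ℝ, |z - zs| ≤ σ →
          |deriv (fun w => deriv l w + deriv l (w - η * deriv l w)) z| ≤ 1 / η := by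
  set c := iteratedDeriv 2 l zs with hcdef
  have h0 : deriv l zs = 0 := hmin.deriv_eq_zero
  have hl2' : ContDiff ℝ (1 + 1) l := hl.of_le (by norm_num)
  have hg1 : ContDiff ℝ 1 (deriv l) := (contDiff_succ_iff_deriv.mp hl2').2.2
  have hgd : Differentiable ℝ (deriv l) := hg1.differentiable one_ne_zero
  have hg'c : Continuous (deriv (deriv l)) := hg1.continuous_deriv le_rfl
  have hgc : Continuous (deriv l) := hgd.continuous
  have hc2 : c = deriv (deriv l) zs := by
    rw [hcdef, iteratedDeriv_succ, iteratedDeriv_one]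
  -- derivative formula
  have hder : ∀ η z : ℝ, deriv (fun w => deriv l w + deriv l (w - η * deriv l w)) z
      = deriv (deriv l) z + deriv (deriv l) (z - η * deriv l z) * (1 - η * deriv (deriv l) z) := by
    intro η z
    have h1 : HasDerivAt (deriv l) (deriv (deriv l) z) z := (hgd z).hasDerivAt
    have hinner : HasDerivAt (fun w => w - η * deriv l w) (1 - η * deriv (deriv l) z) z :=
      (hasDerivAt_id z).sub (h1.const_mul η)
    have h2 : HasDerivAt (fun w => deriv l (w - η * deriv l w))
        (deriv (deriv l) (z - η * deriv l z) * (1 - η * deriv (deriv l) z)) z :=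
      by have := (hgd (z - η * deriv l z)).hasDerivAt.comp z hinner; exact this
    exact (h1.add h2).deriv
  -- continuity of the derivative as a function of (η, z)
  set F : ℝ × ℝ → ℝ := fun p =>
    deriv (deriv l) p.2 + deriv (deriv l) (p.2 - p.1 * deriv l p.2)
      * (1 - p.1 * deriv (deriv l) p.2) with hF
  have hFc : Continuous F := by
    apply Continuous.add (hg'c.comp continuous_snd)
    apply Continuous.mul
    · exact hg'c.comp (continuous_snd.sub (continuous_fst.mul (hgc.comp continuous_snd)))
    · exact (continuous_const.sub (continuous_fst.mul (hg'c.comp continuous_snd)))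
  have hF0 : F (2 / c, zs) = 0 := by
    simp only [hF, h0, mul_zero, sub_zero, ← hc2]
    field_simp
    ring
  have hcont : ContinuousAt F (2 / c, zs) := hFc.continuousAt
  rw [Metric.continuousAt_iff] at hcont
  obtain ⟨δ, hδ, hball⟩ := hcont (c / 2) (by positivity)
  refine ⟨min 1 (δ * c / 2), by positivity, min 1 (δ / 2), by positivity, ?_⟩
  intro η hη z hz
  set ρ := min 1 (δ * c / 2) with hρdef
  have hρ1 : ρ ≤ 1 := min_le_left _ _
  have hρδ : ρ ≤ δ * c / 2 := min_le_right _ _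
  have hρpos : 0 < ρ := by positivity
  have hηlb : (2 - ρ) / c ≤ η := hη.1
  have hηub : η ≤ 2 / c := hη.2
  have hηpos : 0 < η := lt_of_lt_of_le (div_pos (by linarith) hl2) hηlb
  have heq : 2 / c - (2 - ρ) / c = ρ / c := by ring
  have h4 : ρ / c ≤ δ / 2 := by
    rw [div_le_iff₀ hl2]
    nlinarith
  -- distance estimate
  have hd1 : |η - 2 / c| < δ := by
    rw [abs_sub_lt_iff]
    constructor
    · linarith
    · linarith
  have hd2 : |z - zs| < δ := lt_of_le_of_lt hz (lt_of_le_of_lt (min_le_right _ _) (by linarith))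
  have hdist : dist (η, z) ((2 / c : ℝ), zs) < δ := by
    rw [Prod.dist_eq, max_lt_iff]
    exact ⟨by simpa [Real.dist_eq] using hd1, by simpa [Real.dist_eq] using hd2⟩
  have hbound := hball hdist
  rw [hF0, Real.dist_eq, sub_zero] at hbound
  rw [hder η z]
  have hFeq : F (η, z) = deriv (deriv l) z + deriv (deriv l) (z - η * deriv l z)
      * (1 - η * deriv (deriv l) z) := rfl
  rw [← hFeq]
  have hhalf : c / 2 ≤ 1 / η := by
    rw [div_le_div_iff₀ (by norm_num) hηpos]
    nlinarith [(le_div_iff₀ hl2).mp hηub]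
  linarith [le_of_lt hbound]
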